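/- For every integer n ≥ 1 and all complex polynomials f₁, …, f_n, f_{n+1}, χ, the following identity holds: Wr₂( Wr(f₁,…,f_n,χ), Wr(f₁,…,f_n,f_{n+1}) ) = Wr(f₁,…,f_n) · Wr(f₁,…,f_n,χ,f_{n+1}), where Wr₂(u,v) = u·v′ − u′·v is the two-polynomial Wronskian and Wr(…) denotes the higher-order Wronskian determinant. -/

import Mathlib

open Polynomial

noncomputable section

/-- The Wronskian of two polynomials: `Wr₂(u,v) = u·v′ − u′·v`. -/
def pWr (f g : ℂ[X]) : ℂ[X] := f * derivative g - derivative f * g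

/-- Higher-order Wronskian: determinant of the matrix whose `(j,l)` entry is the
`j`-th formal derivative of `f l` (rows and columns indexed from `0`). -/
def WrN {n : ℕ} (f : Fin n → ℂ[X]) : ℂ[X] :=
  (Matrix.of fun j l : Fin n => (fun q : ℂ[X] => derivative q)^[(j : ℕ)] (f l)).det

namespace WronskianAux

open Matrix

/-! ### Desnanot–Jacobi (Dodgson condensation) -/

lemma dj_field {K : Type*} [Field K] {n : ℕ}
    (A : Matrix (Fin n) (Fin n) K) (B : Matrix (Fin n) (Fin 2) K)
    (C : Matrix (Fin 2) (Fin n) K) (D : Matrix (Fin 2) (Fin 2) K)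
    (hA : IsUnit A.det) :
    (fromBlocks A B C D).det * A.det =
      (fromBlocks A (of fun i (_ : Fin 1) => B i 0) (of fun (_ : Fin 1) j => C 0 j)
          (of fun _ _ => D 0 0)).det *
        (fromBlocks A (of fun i (_ : Fin 1) => B i 1) (of fun (_ : Fin 1) j => C 1 j)
          (of fun _ _ => D 1 1)).det -
      (fromBlocks A (of fun i (_ : Fin 1) => B i 1) (of fun (_ : Fin 1) j => C 0 j)
          (of fun _ _ => D 0 1)).det *
        (fromBlocks A (of fun i (_ : Fin 1) => B i 0) (of fun (_ : Fin 1) j => C 1 j)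
          (of fun _ _ => D 1 0)).det := by
  haveI : Invertible A := A.invertibleOfIsUnitDet hA
  have key : ∀ a b : Fin 2,
      (fromBlocks A (of fun i (_ : Fin 1) => B i b) (of fun (_ : Fin 1) j => C a j)
          (of fun _ _ => D a b)).det = A.det * (D - C * ⅟A * B) a b := by
    intro a b
    rw [det_fromBlocks₁₁]
    congr 1
    rw [det_fin_one]
    simp [Matrix.mul_apply, Matrix.sub_apply, Finset.sum_mul]
  rw [det_fromBlocks₁₁, key, key, key, key, det_fin_two]
  ring

lemma dj_comm {R : Type*} [CommRing R] {n : ℕ}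
    (A : Matrix (Fin n) (Fin n) R) (B : Matrix (Fin n) (Fin 2) R)
    (C : Matrix (Fin 2) (Fin n) R) (D : Matrix (Fin 2) (Fin 2) R) :
    (fromBlocks A B C D).det * A.det =
      (fromBlocks A (of fun i (_ : Fin 1) => B i 0) (of fun (_ : Fin 1) j => C 0 j)
          (of fun _ _ => D 0 0)).det *
        (fromBlocks A (of fun i (_ : Fin 1) => B i 1) (of fun (_ : Fin 1) j => C 1 j)
          (of fun _ _ => D 1 1)).det -
      (fromBlocks A (of fun i (_ : Fin 1) => B i 1) (of fun (_ : Fin 1) j => C 0 j)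
          (of fun _ _ => D 0 1)).det *
        (fromBlocks A (of fun i (_ : Fin 1) => B i 0) (of fun (_ : Fin 1) j => C 1 j)
          (of fun _ _ => D 1 0)).det := by
  classical
  let ι := (Fin n ⊕ Fin 2)
  let P := MvPolynomial (ι × ι) ℤ
  let gM : Matrix ι ι P := Matrix.mvPolynomialX ι ι ℤ
  let gA := gM.toBlocks₁₁
  let gB := gM.toBlocks₁₂
  let gC := gM.toBlocks₂₁
  let gD := gM.toBlocks₂₂
  -- the generic top-left block has nonzero determinant
  have hdet : gA.det ≠ 0 := by
    intro h
    let e : P →+* ℤ := MvPolynomial.eval₂Hom (RingHom.id ℤ)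
      (fun s : ι × ι => if s.1 = s.2 then 1 else 0)
    have h1 : e.mapMatrix gA = (1 : Matrix (Fin n) (Fin n) ℤ) := by
      ext i j
      show e (MvPolynomial.X ((Sum.inl i : ι), (Sum.inl j : ι))) = _
      rw [MvPolynomial.eval₂Hom_X']
      by_cases hij : i = j <;> simp [Matrix.one_apply, hij] <;>
        exact fun hh => hij (Sum.inl.inj hh)
    have h2 := congrArg e h
    rw [RingHom.map_det, h1, det_one, map_zero] at h2
    exact one_ne_zero h2
  -- the identity over the generic polynomial ring
  let F := FractionRing P
  let alg := algebraMap P F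
  have hinj : Function.Injective alg := IsFractionRing.injective P F
  have hP : (fromBlocks gA gB gC gD).det * gA.det =
      (fromBlocks gA (of fun i (_ : Fin 1) => gB i 0) (of fun (_ : Fin 1) j => gC 0 j)
          (of fun _ _ => gD 0 0)).det *
        (fromBlocks gA (of fun i (_ : Fin 1) => gB i 1) (of fun (_ : Fin 1) j => gC 1 j)
          (of fun _ _ => gD 1 1)).det -
      (fromBlocks gA (of fun i (_ : Fin 1) => gB i 1) (of fun (_ : Fin 1) j => gC 0 j)
          (of fun _ _ => gD 0 1)).det *
        (fromBlocks gA (of fun i (_ : Fin 1) => gB i 0) (of fun (_ : Fin 1) j => gC 1 j)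
          (of fun _ _ => gD 1 0)).det := by
    apply hinj
    have halg : IsUnit ((gA.map alg).det) := by
      have hd : (gA.map alg).det = alg gA.det := by
        rw [RingHom.map_det]; rfl
      rw [hd]
      exact isUnit_iff_ne_zero.mpr
        (fun h => hdet (hinj (by rw [map_zero]; exact h)))
    have hdj := dj_field (gA.map alg) (gB.map alg) (gC.map alg) (gD.map alg) halg
    have hcol : ∀ b, (of fun i (_ : Fin 1) => gB i b).map alg
        = of fun i (_ : Fin 1) => (gB.map alg) i b := fun b => by ext i x; rfl
    have hrow : ∀ a, (of fun (_ : Fin 1) j => gC a j).map alg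
        = of fun (_ : Fin 1) j => (gC.map alg) a j := fun a => by ext x j; rfl
    have hent : ∀ a b, (of fun (_ : Fin 1) (_ : Fin 1) => gD a b).map alg
        = of fun (_ : Fin 1) (_ : Fin 1) => (gD.map alg) a b := fun a b => by ext x y; rfl
    rw [_root_.map_mul, _root_.map_sub, _root_.map_mul, _root_.map_mul,
      RingHom.map_det, RingHom.map_det, RingHom.map_det, RingHom.map_det,
      RingHom.map_det, RingHom.map_det]
    simp only [RingHom.mapMatrix_apply, Matrix.fromBlocks_map, hcol, hrow, hent]
    exact hdj
  -- specialize to `R`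
  let v : ι × ι → R := fun s => fromBlocks A B C D s.1 s.2
  let φ : P →+* R := MvPolynomial.eval₂Hom (Int.castRingHom R) v
  have hφA : gA.map φ = A := by
    ext i j; exact MvPolynomial.eval₂Hom_X' _ _ _
  have hφB : gB.map φ = B := by
    ext i j; exact MvPolynomial.eval₂Hom_X' _ _ _
  have hφC : gC.map φ = C := by
    ext i j; exact MvPolynomial.eval₂Hom_X' _ _ _
  have hφD : gD.map φ = D := by
    ext i j; exact MvPolynomial.eval₂Hom_X' _ _ _
  have hcol : ∀ b, (of fun i (_ : Fin 1) => gB i b).map φ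
      = of fun i (_ : Fin 1) => B i b := by intro b; rw [show B = gB.map φ from hφB.symm]; rfl
  have hrow : ∀ a, (of fun (_ : Fin 1) j => gC a j).map φ
      = of fun (_ : Fin 1) j => C a j := by intro a; rw [show C = gC.map φ from hφC.symm]; rfl
  have hent : ∀ a b, (of fun (_ : Fin 1) (_ : Fin 1) => gD a b).map φ
      = of fun (_ : Fin 1) (_ : Fin 1) => D a b := by
    intro a b; rw [show D = gD.map φ from hφD.symm]; rfl
  have hfin := congrArg φ hP
  rw [_root_.map_mul, _root_.map_sub, _root_.map_mul, _root_.map_mul,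
    RingHom.map_det, RingHom.map_det, RingHom.map_det, RingHom.map_det,
    RingHom.map_det, RingHom.map_det] at hfin
  simp only [RingHom.mapMatrix_apply, Matrix.fromBlocks_map, hcol, hrow, hent,
    hφA, hφB, hφC, hφD] at hfin
  exact hfin

/-- The map `Fin (n+1) → Fin (n+2)` keeping `0,…,n-1` and `n+a`. -/
def kmap {n : ℕ} (a : Fin 2) : Fin (n+1) → Fin (n+2) :=
  Fin.snoc (fun i : Fin n => i.castSucc.castSucc) (Fin.natAdd n a)

lemma dj_fin {R : Type*} [CommRing R] {n : ℕ} (M : Matrix (Fin (n+2)) (Fin (n+2)) R) :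
    M.det * (M.submatrix (fun i : Fin n => i.castSucc.castSucc)
        (fun i : Fin n => i.castSucc.castSucc)).det =
      (M.submatrix (kmap 0) (kmap 0)).det * (M.submatrix (kmap 1) (kmap 1)).det -
      (M.submatrix (kmap 0) (kmap 1)).det * (M.submatrix (kmap 1) (kmap 0)).det := by
  classical
  set cc : Fin n → Fin (n+2) := fun i => i.castSucc.castSucc with hcc
  let A : Matrix (Fin n) (Fin n) R := of fun i j => M (cc i) (cc j)
  let B : Matrix (Fin n) (Fin 2) R := of fun i b => M (cc i) (Fin.natAdd n b)
  let C : Matrix (Fin 2) (Fin n) R := of fun a j => M (Fin.natAdd n a) (cc j)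
  let D : Matrix (Fin 2) (Fin 2) R := of fun a b => M (Fin.natAdd n a) (Fin.natAdd n b)
  have hk : ∀ (a : Fin 2) (i : Fin n), kmap a (Fin.castAdd 1 i) = cc i := by
    intro a i
    show (Fin.snoc _ _ : Fin (n+1) → Fin (n+2)) i.castSucc = cc i
    rw [Fin.snoc_castSucc]
  have hk' : ∀ a : Fin 2, kmap a (Fin.natAdd n (0 : Fin 1)) = Fin.natAdd n a := by
    intro a
    have : (Fin.natAdd n (0 : Fin 1) : Fin (n+1)) = Fin.last n := by
      ext; simp
    rw [this]
    show (Fin.snoc _ _ : Fin (n+1) → Fin (n+2)) (Fin.last n) = _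
    rw [Fin.snoc_last]
  have hM : M.det = (fromBlocks A B C D).det := by
    rw [← det_submatrix_equiv_self (finSumFinEquiv (m := n) (n := 2)) M]
    congr 1
    ext i j
    cases i <;> cases j <;> rfl
  have hab : ∀ a b : Fin 2, (M.submatrix (kmap a) (kmap b)).det =
      (fromBlocks A (of fun i (_ : Fin 1) => B i b) (of fun (_ : Fin 1) j => C a j)
        (of fun (_ : Fin 1) (_ : Fin 1) => D a b)).det := by
    intro a b
    rw [← det_submatrix_equiv_self (finSumFinEquiv (m := n) (n := 1))
      (M.submatrix (kmap a) (kmap b))]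
    congr 1
    ext i j
    cases' i with i i <;> cases' j with j j <;>
      simp [finSumFinEquiv, Fin.fin_one_eq_zero,
        hk, hk', A, B, C, D]
  have hA : M.submatrix cc cc = A := rfl
  rw [hM, hA, hab, hab, hab, hab]
  exact dj_comm A B C D

/-! ### Derivative of a determinant of polynomials -/

lemma derivative_finset_prod {ι : Type*} [DecidableEq ι] (s : Finset ι) (f : ι → ℂ[X]) :
    derivative (∏ i ∈ s, f i) = ∑ i ∈ s, (∏ j ∈ s.erase i, f j) * derivative (f i) := by
  induction s using Finset.induction_on with
  | empty => simp
  | @insert a s ha ih =>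
    rw [Finset.prod_insert ha, derivative_mul, ih, Finset.sum_insert ha,
      Finset.erase_insert ha, Finset.mul_sum, mul_comm (derivative (f a))]
    congr 1
    refine Finset.sum_congr rfl fun i hi => ?_
    rw [Finset.erase_insert_of_ne (by rintro rfl; exact ha hi), Finset.prod_insert
      (fun h => ha (Finset.mem_of_mem_erase h)), mul_assoc]

lemma derivative_det {m : ℕ} (M : Matrix (Fin m) (Fin m) ℂ[X]) :
    derivative M.det = ∑ r, (M.updateRow r (fun l => derivative (M r l))).det := by
  classical
  rw [det_apply, map_sum]
  have hR : ∀ r, (M.updateRow r (fun l => derivative (M r l))).det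
      = ∑ σ : Equiv.Perm (Fin m), Equiv.Perm.sign σ •
          ∏ i, (M.updateRow r (fun l => derivative (M r l))) (σ i) i := fun r => det_apply _
  simp only [hR]
  rw [Finset.sum_comm]
  refine Finset.sum_congr rfl fun σ _ => ?_
  have hσ : ∀ k : Fin m,
      (∏ i, (M.updateRow (σ k) (fun l => derivative (M (σ k) l))) (σ i) i)
        = (∏ j ∈ Finset.univ.erase k, M (σ j) j) * derivative (M (σ k) k) := by
    intro k
    rw [← Finset.mul_prod_erase Finset.univ _ (Finset.mem_univ k), mul_comm]
    congr 1
    · refine Finset.prod_congr rfl fun i hi => ?_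
      have hne : σ i ≠ σ k := fun h => (Finset.ne_of_mem_erase hi) (σ.injective h)
      simp [Matrix.updateRow_apply, hne]
    · simp [Matrix.updateRow_apply]
  calc derivative (Equiv.Perm.sign σ • ∏ i, M (σ i) i)
      = Equiv.Perm.sign σ • derivative (∏ i, M (σ i) i) := by
        rw [Units.smul_def, Units.smul_def, map_zsmul]
    _ = Equiv.Perm.sign σ • ∑ k, (∏ j ∈ Finset.univ.erase k, M (σ j) j)
          * derivative (M (σ k) k) := by
        rw [derivative_finset_prod]
    _ = ∑ k, Equiv.Perm.sign σ • ((∏ j ∈ Finset.univ.erase k, M (σ j) j)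
          * derivative (M (σ k) k)) := by rw [Finset.smul_sum]
    _ = ∑ r, Equiv.Perm.sign σ •
          ∏ i, (M.updateRow r (fun l => derivative (M r l))) (σ i) i := by
        rw [← Equiv.sum_comp σ (fun r => Equiv.Perm.sign σ •
          ∏ i, (M.updateRow r (fun l => derivative (M r l))) (σ i) i)]
        exact Finset.sum_congr rfl fun k _ => by rw [hσ k]

/-- Differentiating a Wronskian determinant differentiates only the last row. -/
lemma derivative_WrN {m : ℕ} (h : Fin (m+1) → ℂ[X]) :
    derivative (WrN h) =
      (Matrix.of fun j l : Fin (m+1) =>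
        (fun q : ℂ[X] => derivative q)^[(Fin.snoc (fun i : Fin m => (i : ℕ)) (m+1) :
          Fin (m+1) → ℕ) j] (h l)).det := by
  classical
  set Dr : ℂ[X] → ℂ[X] := fun q => derivative q with hDr
  set W : Matrix (Fin (m+1)) (Fin (m+1)) ℂ[X] :=
    Matrix.of fun j l : Fin (m+1) => Dr^[(j : ℕ)] (h l) with hW
  have hWrN : WrN h = W.det := rfl
  rw [hWrN, derivative_det]
  rw [Finset.sum_eq_single (Fin.last m)]
  · congr 1
    refine Matrix.ext fun j l => ?_
    rcases eq_or_ne j (Fin.last m) with rfl | hj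
    · rw [Matrix.updateRow_self]
      have hsl : (Fin.snoc (fun i : Fin m => (i : ℕ)) (m+1) : Fin (m+1) → ℕ) (Fin.last m)
          = m + 1 := Fin.snoc_last _ _
      simp only [Matrix.of_apply]
      rw [hsl]
      show derivative (Dr^[m] (h l)) = Dr^[m+1] (h l)
      rw [Function.iterate_succ_apply' Dr m (h l)]
    · rw [Matrix.updateRow_ne hj]
      obtain ⟨i, rfl⟩ := Fin.exists_castSucc_eq.mpr hj
      have hsc : (Fin.snoc (fun i : Fin m => (i : ℕ)) (m+1) : Fin (m+1) → ℕ) i.castSucc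
          = (i : ℕ) := Fin.snoc_castSucc _ _ _
      simp only [Matrix.of_apply]
      rw [hsc]
      rfl
  · intro j _ hj
    obtain ⟨i, rfl⟩ := Fin.exists_castSucc_eq.mpr hj
    have hi1 : (i : ℕ) + 1 < m + 1 := by omega
    have hne : (⟨(i : ℕ) + 1, hi1⟩ : Fin (m+1)) ≠ i.castSucc := by
      intro hcontra
      have := congrArg Fin.val hcontra
      simp at this
    apply Matrix.det_zero_of_row_eq hne
    funext l
    rw [Matrix.updateRow_ne hne, Matrix.updateRow_self]
    show Dr^[(i : ℕ) + 1] (h l) = derivative (Dr^[(i : ℕ)] (h l))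
    rw [Function.iterate_succ_apply' Dr (i : ℕ) (h l)]
  · intro hl
    exact absurd (Finset.mem_univ _) hl

end WronskianAux

open WronskianAux Matrix

/-- `Wr₂(Wr(f₁,…,f_n,χ), Wr(f₁,…,f_n,f_{n+1})) = Wr(f₁,…,f_n)·Wr(f₁,…,f_n,χ,f_{n+1})`. -/
theorem wronskian_identity (n : ℕ) (hn : 1 ≤ n) (f : Fin n → ℂ[X]) (g χ : ℂ[X]) :
    pWr (WrN (Fin.snoc f χ)) (WrN (Fin.snoc f g)) =
      WrN f * WrN (Fin.snoc (Fin.snoc f χ) g) := by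
  classical
  set Dr : ℂ[X] → ℂ[X] := fun q => derivative q with hDr
  set F : Fin (n+2) → ℂ[X] := Fin.snoc (Fin.snoc f χ) g with hF
  set M : Matrix (Fin (n+2)) (Fin (n+2)) ℂ[X] :=
    Matrix.of fun j l : Fin (n+2) => Dr^[(j : ℕ)] (F l) with hM
  -- index bookkeeping
  have hccF : ∀ i : Fin n, F (i.castSucc.castSucc) = f i := by
    intro i
    rw [hF]
    rw [show (i.castSucc.castSucc : Fin (n+2)) = (i.castSucc : Fin (n+1)).castSucc from rfl]
    rw [Fin.snoc_castSucc, Fin.snoc_castSucc]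
  have hn0 : (Fin.natAdd n (0 : Fin 2) : Fin (n+2)) = (Fin.last n).castSucc := by ext; simp
  have hn1 : (Fin.natAdd n (1 : Fin 2) : Fin (n+2)) = Fin.last (n+1) := by ext; simp
  have hFχ : F (Fin.natAdd n (0 : Fin 2)) = χ := by
    rw [hn0, hF, Fin.snoc_castSucc, Fin.snoc_last]
  have hFg : F (Fin.natAdd n (1 : Fin 2)) = g := by
    rw [hn1, hF, Fin.snoc_last]
  have hkval : ∀ (a : Fin 2) (i : Fin n),
      kmap (n := n) a (i.castSucc) = i.castSucc.castSucc := by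
    intro a i
    show (Fin.snoc _ _ : Fin (n+1) → Fin (n+2)) i.castSucc = _
    rw [Fin.snoc_castSucc]
  have hklast : ∀ a : Fin 2, kmap (n := n) a (Fin.last n) = Fin.natAdd n a := by
    intro a
    show (Fin.snoc _ _ : Fin (n+1) → Fin (n+2)) (Fin.last n) = _
    rw [Fin.snoc_last]
  -- the six determinants
  have h1 : WrN F = M.det := rfl
  have h2 : WrN f = (M.submatrix (fun i : Fin n => i.castSucc.castSucc)
      (fun i : Fin n => i.castSucc.castSucc)).det := by
    unfold WrN
    congr 1
    ext j l
    rw [Matrix.submatrix_apply, hM, Matrix.of_apply, Matrix.of_apply, hccF]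
    rfl
  have h3 : ∀ (b : Fin 2) (u : ℂ[X]), F (Fin.natAdd n b) = u →
      WrN (Fin.snoc f u) = (M.submatrix (kmap 0) (kmap b)).det := by
    intro b u hu
    unfold WrN
    congr 1
    ext j l
    rw [Matrix.submatrix_apply, hM, Matrix.of_apply, Matrix.of_apply]
    rcases eq_or_ne l (Fin.last n) with rfl | hl
    · rw [hklast, hu, Fin.snoc_last]
      congr 1
      rcases eq_or_ne j (Fin.last n) with rfl | hj
      · rw [hklast]; rw [hn0]; simp; rfl
      · obtain ⟨i, rfl⟩ := Fin.exists_castSucc_eq.mpr hj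
        rw [hkval]; simp; rfl
    · obtain ⟨i, rfl⟩ := Fin.exists_castSucc_eq.mpr hl
      rw [hkval, hccF, Fin.snoc_castSucc]
      congr 1
      rcases eq_or_ne j (Fin.last n) with rfl | hj
      · rw [hklast]; rw [hn0]; simp; rfl
      · obtain ⟨i', rfl⟩ := Fin.exists_castSucc_eq.mpr hj
        rw [hkval]; simp; rfl
  have h4 : ∀ (b : Fin 2) (u : ℂ[X]), F (Fin.natAdd n b) = u →
      derivative (WrN (Fin.snoc f u)) = (M.submatrix (kmap 1) (kmap b)).det := by
    intro b u hu
    rw [derivative_WrN]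
    congr 1
    ext j l
    rw [Matrix.submatrix_apply, hM, Matrix.of_apply, Matrix.of_apply]
    rcases eq_or_ne l (Fin.last n) with rfl | hl
    · rw [hklast, hu, Fin.snoc_last]
      congr 1
      rcases eq_or_ne j (Fin.last n) with rfl | hj
      · rw [hklast, Fin.snoc_last, hn1]; simp; rfl
      · obtain ⟨i, rfl⟩ := Fin.exists_castSucc_eq.mpr hj
        rw [hkval, Fin.snoc_castSucc]; simp; rfl
    · obtain ⟨i, rfl⟩ := Fin.exists_castSucc_eq.mpr hl
      rw [hkval, hccF, Fin.snoc_castSucc]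
      congr 1
      rcases eq_or_ne j (Fin.last n) with rfl | hj
      · rw [hklast, Fin.snoc_last, hn1]; simp; rfl
      · obtain ⟨i', rfl⟩ := Fin.exists_castSucc_eq.mpr hj
        rw [hkval, Fin.snoc_castSucc]; simp; rfl
  have hdj := dj_fin M
  rw [pWr, h4 0 χ hFχ, h4 1 g hFg, h3 0 χ hFχ, h3 1 g hFg, h2, h1]
  linear_combination -hdj
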